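/- Let r > 0 and let x : ℝ → ℝ^d be a function whose initial segment ξ := x_0 satisfies ‖ξ‖_r < ∞. Then for every t ≥ 0, ‖x_t‖²_r ≤ e^{−2rt}‖ξ‖²_r + sup_{0 ≤ s ≤ t}|x(s)|². -/
import Mathlib


open scoped ENNReal NNReal

/-- The segment `x_t(θ) = x(t + θ)`. -/
def seg {d : ℕ} (x : ℝ → EuclideanSpace ℝ (Fin d)) (t : ℝ) :
    ℝ → EuclideanSpace ℝ (Fin d) := fun θ => x (t + θ)

/-- The weighted norm `‖φ‖_r = sup_{θ ≤ 0} e^{rθ} |φ(θ)|`, valued in `[0,∞]`. -/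
noncomputable def rnormE {d : ℕ} (r : ℝ) (φ : ℝ → EuclideanSpace ℝ (Fin d)) : ℝ≥0∞ :=
  ⨆ θ : Set.Iic (0 : ℝ), ENNReal.ofReal (Real.exp (r * θ.1)) * (‖φ θ.1‖₊ : ℝ≥0∞)

lemma ennreal_iSup_sq {ι : Sort*} (f : ι → ℝ≥0∞) : (⨆ i, f i) ^ 2 = ⨆ i, (f i) ^ 2 := by
  apply le_antisymm
  · rw [sq, ENNReal.iSup_mul]
    refine iSup_le fun i => ?_
    rw [ENNReal.mul_iSup]
    refine iSup_le fun j => ?_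
    rcases le_total (f i) (f j) with h | h
    · calc f i * f j ≤ f j * f j := by gcongr
        _ = (f j) ^ 2 := (sq _).symm
        _ ≤ ⨆ k, (f k) ^ 2 := le_iSup (fun k => (f k) ^ 2) j
    · calc f i * f j ≤ f i * f i := by gcongr
        _ = (f i) ^ 2 := (sq _).symm
        _ ≤ ⨆ k, (f k) ^ 2 := le_iSup (fun k => (f k) ^ 2) i
  · exact iSup_le fun i => by gcongr; exact le_iSup f i

/-- if `ξ := x_0` satisfies `‖ξ‖_r < ∞`, then for every `t ≥ 0`,
`‖x_t‖²_r ≤ e^{−2rt} ‖ξ‖²_r + sup_{0 ≤ s ≤ t} |x(s)|²`. -/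
theorem segment_norm_sq_bound {d : ℕ} (r : ℝ) (hr : 0 < r)
    (x : ℝ → EuclideanSpace ℝ (Fin d))
    (hfin : rnormE r (seg x 0) < ⊤) (t : ℝ) (ht : 0 ≤ t) :
    (rnormE r (seg x t)) ^ 2
      ≤ ENNReal.ofReal (Real.exp (-2 * r * t)) * (rnormE r (seg x 0)) ^ 2
        + ⨆ s : Set.Icc (0 : ℝ) t, (‖x s.1‖₊ : ℝ≥0∞) ^ 2 := by
  rw [rnormE, ennreal_iSup_sq]
  refine iSup_le fun ⟨θ, hθ⟩ => ?_
  simp only at hθ ⊢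
  by_cases h : t + θ ≤ 0
  · -- far past: bound by the first term
    have key : ENNReal.ofReal (Real.exp (r * θ)) * (‖seg x t θ‖₊ : ℝ≥0∞)
        ≤ ENNReal.ofReal (Real.exp (-(r * t))) * rnormE r (seg x 0) := by
      have hexp : Real.exp (r * θ) = Real.exp (-(r * t)) * Real.exp (r * (t + θ)) := by
        rw [← Real.exp_add]; ring_nf
      rw [hexp, ENNReal.ofReal_mul (Real.exp_nonneg _), mul_assoc]
      gcongr
      have := le_iSup (fun θ' : Set.Iic (0 : ℝ) =>
        ENNReal.ofReal (Real.exp (r * θ'.1)) * (‖seg x 0 θ'.1‖₊ : ℝ≥0∞)) ⟨t + θ, h⟩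
      simpa [rnormE, seg] using this
    calc (ENNReal.ofReal (Real.exp (r * θ)) * (‖seg x t θ‖₊ : ℝ≥0∞)) ^ 2
        ≤ (ENNReal.ofReal (Real.exp (-(r * t))) * rnormE r (seg x 0)) ^ 2 := by gcongr
      _ = ENNReal.ofReal (Real.exp (-2 * r * t)) * (rnormE r (seg x 0)) ^ 2 := by
          rw [mul_pow, ← ENNReal.ofReal_pow (Real.exp_nonneg _), ← Real.exp_nat_mul]
          norm_num; ring_nf
      _ ≤ _ := le_self_add
  · -- recent past: bound by the sup term
    push_neg at h
    have hterm : ENNReal.ofReal (Real.exp (r * θ)) * (‖seg x t θ‖₊ : ℝ≥0∞)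
        ≤ (‖x (t + θ)‖₊ : ℝ≥0∞) := by
      calc ENNReal.ofReal (Real.exp (r * θ)) * (‖seg x t θ‖₊ : ℝ≥0∞)
          ≤ 1 * (‖seg x t θ‖₊ : ℝ≥0∞) := by
            gcongr
            simpa using ENNReal.ofReal_le_one.2
              (Real.exp_le_one_iff.2 (mul_nonpos_of_nonneg_of_nonpos hr.le hθ))
        _ = (‖x (t + θ)‖₊ : ℝ≥0∞) := by simp [seg]
    calc (ENNReal.ofReal (Real.exp (r * θ)) * (‖seg x t θ‖₊ : ℝ≥0∞)) ^ 2
        ≤ (‖x (t + θ)‖₊ : ℝ≥0∞) ^ 2 := by gcongr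
      _ ≤ ⨆ s : Set.Icc (0 : ℝ) t, (‖x s.1‖₊ : ℝ≥0∞) ^ 2 :=
          le_iSup (fun s : Set.Icc (0 : ℝ) t => (‖x s.1‖₊ : ℝ≥0∞) ^ 2)
            ⟨t + θ, h.le, by have := Set.mem_Iic.1 hθ; linarith⟩
      _ ≤ _ := le_add_self
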